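/- Fix c with 0 < c < 1, and suppose that for every group a ∈ G the conditional law of p(X) given g(X) = a has positive density on [0,1], and that μ(Y = 0, g(X) = a) > 0 for every a ∈ G. Then there exist constants t_a ∈ [0,1] for a ∈ G such that the decision rule d*(x) = 1 if p(x) ≥ t_{g(x)} and 0 otherwise satisfies predictive equality, and u(d,c) ≤ u(d*,c) for every decision rule d satisfying predictive equality. -/

import Mathlib

open MeasureTheory ProbabilityTheory Set

noncomputable section

/-- A probability law on ℝ has positive density on `[0,1]`. -/
def PosDensity01 (ν : Measure ℝ) : Prop :=
  ∃ φ : ℝ → ENNReal,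
    ν = volume.withDensity φ ∧
    (∀ᵐ x ∂(volume.restrict (Icc (0:ℝ) 1)), 0 < φ x) ∧
    (∀ᵐ x ∂(volume : Measure ℝ), x ∉ Icc (0:ℝ) 1 → φ x = 0)

/-- A decision rule `d` satisfies predictive equality:
`E[d(X) | Y = 0, g(X) = a] = E[d(X) | Y = 0]` for every group `a`. -/
def PredEq {Ω 𝒳 G : Type*} [MeasurableSpace Ω]
    (μ : Measure Ω) (X : Ω → 𝒳) (Y : Ω → ℝ) (g : 𝒳 → G) (d : 𝒳 → ℝ) : Prop :=
  ∀ a : G,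
    (∫ ω in {ω | Y ω = 0 ∧ g (X ω) = a}, d (X ω) ∂μ)
        / (μ {ω | Y ω = 0 ∧ g (X ω) = a}).toReal
      = (∫ ω in {ω | Y ω = 0}, d (X ω) ∂μ) / (μ {ω | Y ω = 0}).toReal

lemma aux_int {Ω : Type*} [MeasurableSpace Ω] (μ : Measure Ω) [IsFiniteMeasure μ]
    {f : Ω → ℝ} (hf : Measurable f) {C : ℝ} (h : ∀ ω, |f ω| ≤ C) : Integrable f μ :=
  (integrable_const C).mono' hf.aestronglyMeasurable (Filter.Eventually.of_forall h)

lemma aux_cont (ρ : Measure ℝ) [IsFiniteMeasure ρ] (hρ : ρ ≪ volume)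
    (h : ℝ → ℝ) (hh : Measurable h) (C : ℝ) (hb : ∀ s, |h s| ≤ C) :
    Continuous fun t => ∫ s in Ici t, h s ∂ρ := by
  set ψ : ℝ → ENNReal := ρ.rnDeriv volume with hψ
  have hψm : Measurable ψ := Measure.measurable_rnDeriv _ _
  have hρeq : volume.withDensity ψ = ρ := Measure.withDensity_rnDeriv_eq ρ volume hρ
  have hψint : ∫⁻ s, ψ s ∂volume ≠ ⊤ := by
    rw [← setLIntegral_univ, ← withDensity_apply ψ MeasurableSet.univ, hρeq]
    exact measure_ne_top ρ univ
  have hψr : Integrable (fun s => (ψ s).toReal) volume :=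
    integrable_toReal_of_lintegral_ne_top hψm.aemeasurable hψint
  set g : ℝ → ℝ := fun s => (ψ s).toReal * h s with hg
  have hgm : Measurable g := hψm.ennreal_toReal.mul hh
  have hgi : Integrable g volume := by
    have hC : 0 ≤ C := le_trans (abs_nonneg _) (hb 0)
    refine (hψr.const_mul C).mono' hgm.aestronglyMeasurable (Filter.Eventually.of_forall ?_)
    intro s
    rw [Real.norm_eq_abs, hg]
    simp only [abs_mul, abs_of_nonneg ENNReal.toReal_nonneg]
    calc (ψ s).toReal * |h s| ≤ (ψ s).toReal * C := by
          exact mul_le_mul_of_nonneg_left (hb s) ENNReal.toReal_nonneg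
      _ = C * (ψ s).toReal := mul_comm _ _
  have key : ∀ t, ∫ s in Ici t, h s ∂ρ = ∫ s in Ici t, g s ∂volume := by
    intro t
    have hae : ∀ᵐ s ∂(volume : Measure ℝ), ψ s < ⊤ := Measure.rnDeriv_lt_top ρ volume
    have : ρ = volume.withDensity (fun s => ((ψ s).toNNReal : ENNReal)) := by
      rw [← hρeq]
      exact withDensity_congr_ae (hae.mono fun s hs => (ENNReal.coe_toNNReal hs.ne).symm)
    rw [this, setIntegral_withDensity_eq_setIntegral_smul₀
      (hψm.ennreal_toNNReal).aemeasurable _ measurableSet_Ici]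
    refine setIntegral_congr_fun measurableSet_Ici fun s _ => ?_
    simp only [NNReal.smul_def, smul_eq_mul, ENNReal.coe_toNNReal_eq_toReal]
    rfl
  have keyc : Continuous fun t => ∫ s in Iic t, g s ∂volume := by
    have h2 : ∀ t, ∫ s in Iic t, g s ∂volume
        = (∫ s in Iic (0:ℝ), g s ∂volume) + ∫ s in (0:ℝ)..t, g s ∂volume := by
      intro t
      rw [← intervalIntegral.integral_Iic_sub_Iic hgi.integrableOn hgi.integrableOn]
      ring
    rw [show (fun t => ∫ s in Iic t, g s ∂volume)
        = fun t => (∫ s in Iic (0:ℝ), g s ∂volume) + ∫ s in (0:ℝ)..t, g s ∂volume from funext h2]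
    exact continuous_const.add
      (intervalIntegral.continuous_primitive (fun a b => hgi.intervalIntegrable) 0)
  have h3 : ∀ t, ∫ s in Ici t, g s ∂volume = (∫ s, g s ∂volume) - ∫ s in Iic t, g s ∂volume := by
    intro t
    have h4 := integral_add_compl (measurableSet_Ici (a := t)) hgi
    have hcompl : (Ici t)ᶜ = Iio t := by simp
    rw [hcompl] at h4
    rw [← h4, setIntegral_congr_set Iio_ae_eq_Iic]
    ring
  simp only [key, h3]
  exact continuous_const.sub keyc

lemma aux_np (c t pv dv : ℝ) (hc1 : c < 1) (ht1 : t < 1) (hd0 : 0 ≤ dv) (hd1 : dv ≤ 1) :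
    (t - c) / (1 - t) * ((1 - pv) * ((if t ≤ pv then (1:ℝ) else 0) - dv))
      ≤ (pv - c) * ((if t ≤ pv then (1:ℝ) else 0) - dv) := by
  have h1t : 0 < 1 - t := by linarith
  rw [div_mul_eq_mul_div, div_le_iff₀ h1t]
  split_ifs with hle
  · nlinarith [mul_nonneg (sub_nonneg.2 hle) (sub_nonneg.2 hc1.le)]
  · push_neg at hle
    nlinarith [mul_nonneg (sub_nonneg.2 hle.le) (sub_nonneg.2 hc1.le)]

lemma aux_ind (ρ : Measure ℝ) [IsFiniteMeasure ρ] (h : ℝ → ℝ) (t : ℝ) :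
    ∫ s, h s * (if t ≤ s then 1 else 0) ∂ρ = ∫ s in Ici t, h s ∂ρ := by
  rw [← integral_indicator measurableSet_Ici]
  refine integral_congr_ae (Filter.Eventually.of_forall fun s => ?_)
  by_cases hs : t ≤ s
  · simp [indicator, hs]
  · simp [indicator, hs]

lemma aux_total (ρ : Measure ℝ) [IsFiniteMeasure ρ] (h0 : ρ (Iio 0) = 0)
    (h : ℝ → ℝ) (hh : Measurable h) (C : ℝ) (hb : ∀ s, |h s| ≤ C) :
    ∫ s in Ici (0:ℝ), h s ∂ρ = ∫ s, h s ∂ρ := by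
  have hi : Integrable h ρ := aux_int ρ hh hb
  have h4 := integral_add_compl (measurableSet_Ici (a := (0:ℝ))) hi
  rw [← h4]
  have hcompl : (Ici (0:ℝ))ᶜ = Iio 0 := by simp
  rw [hcompl]
  have : ρ.restrict (Iio 0) = 0 := Measure.restrict_eq_zero.mpr h0
  rw [this]
  simp

lemma aux_Ici1 (ρ : Measure ℝ) (h1 : ρ (Ioi 1) = 0) (hatom : ρ {(1:ℝ)} = 0)
    (h : ℝ → ℝ) : ∫ s in Ici (1:ℝ), h s ∂ρ = 0 := by
  have : ρ (Ici (1:ℝ)) = 0 := by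
    have hsub : Ici (1:ℝ) ⊆ {(1:ℝ)} ∪ Ioi 1 := by
      intro s hs
      rcases eq_or_lt_of_le (mem_Ici.mp hs) with h | h
      · exact Or.inl (by simp [h.symm])
      · exact Or.inr h
    refine measure_mono_null hsub ?_
    exact le_antisymm (le_trans (measure_union_le _ _) (by simp [hatom, h1])) zero_le
  rw [Measure.restrict_eq_zero.mpr this]
  simp

theorem stmt_7
    {Ω 𝒳 G : Type*} [MeasurableSpace Ω] [MeasurableSpace 𝒳]
    [Fintype G] [MeasurableSpace G] [MeasurableSingletonClass G]
    (μ : Measure Ω) [IsProbabilityMeasure μ]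
    (X : Ω → 𝒳) (hX : Measurable X)
    (Y : Ω → ℝ) (hY : Measurable Y) (hY01 : ∀ ω, Y ω = 0 ∨ Y ω = 1)
    (p : 𝒳 → ℝ) (hp : Measurable p) (hp01 : ∀ x, p x ∈ Icc (0:ℝ) 1)
    (hrisk : ∀ f : 𝒳 → ℝ, Measurable f → (∃ C, ∀ x, |f x| ≤ C) →
      ∫ ω, Y ω * f (X ω) ∂μ = ∫ ω, p (X ω) * f (X ω) ∂μ)
    (g : 𝒳 → G) (hg : Measurable g)
    (hgpos : ∀ a : G, 0 < μ {ω | g (X ω) = a})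
    (hdens : ∀ a : G,
      PosDensity01 (Measure.map (fun ω => p (X ω))
        (ProbabilityTheory.cond μ {ω | g (X ω) = a})))
    (hY0pos : ∀ a : G, 0 < μ {ω | Y ω = 0 ∧ g (X ω) = a})
    (c : ℝ) (hc0 : 0 < c) (hc1 : c < 1) :
    ∃ t : G → ℝ, (∀ a : G, t a ∈ Icc (0:ℝ) 1) ∧
      PredEq μ X Y g (fun x => if t (g x) ≤ p x then (1:ℝ) else 0) ∧
      ∀ d : 𝒳 → ℝ, Measurable d → (∀ x, d x ∈ Icc (0:ℝ) 1) →
        PredEq μ X Y g d →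
        (∫ ω, Y ω * d (X ω) ∂μ) - c * ∫ ω, d (X ω) ∂μ
          ≤ (∫ ω, Y ω * (if t (g (X ω)) ≤ p (X ω) then (1:ℝ) else 0) ∂μ)
              - c * ∫ ω, (if t (g (X ω)) ≤ p (X ω) then (1:ℝ) else 0) ∂μ := by
  classical
  have hΩne : Nonempty Ω := by
    by_contra h
    rw [not_nonempty_iff] at h
    have h1 : μ univ = 1 := measure_univ
    rw [Set.univ_eq_empty_iff.mpr h] at h1
    simp at h1
  obtain ⟨ω₀⟩ := hΩne
  set a₀ := g (X ω₀) with ha₀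
  haveI : Nonempty G := ⟨a₀⟩
  -- measurability basics
  have hpX : Measurable fun ω => p (X ω) := hp.comp hX
  have hgX : Measurable fun ω => g (X ω) := hg.comp hX
  have hA : ∀ a : G, MeasurableSet {ω | g (X ω) = a} := fun a =>
    hgX (measurableSet_singleton a)
  have hAx : ∀ a : G, MeasurableSet {x | g x = a} := fun a => hg (measurableSet_singleton a)
  have hY0m : MeasurableSet {ω | Y ω = 0} := hY (measurableSet_singleton 0)
  have hS0 : ∀ a : G, MeasurableSet {ω | Y ω = 0 ∧ g (X ω) = a} := fun a =>
    hY0m.inter (hA a)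
  have hDm : ∀ τ : G → ℝ, Measurable fun x => if τ (g x) ≤ p x then (1:ℝ) else 0 := by
    intro τ
    exact Measurable.ite (measurableSet_le ((measurable_of_countable τ).comp hg) hp)
      measurable_const measurable_const
  have hDb : ∀ (τ : G → ℝ) x, |if τ (g x) ≤ p x then (1:ℝ) else 0| ≤ 1 := by
    intro τ x; split_ifs <;> simp
  -- group indicator
  set χ : G → 𝒳 → ℝ := fun a x => if g x = a then 1 else 0 with hχdef
  have hχm : ∀ a, Measurable (χ a) := fun a =>
    Measurable.ite (hAx a) measurable_const measurable_const
  have hχb : ∀ a x, |χ a x| ≤ 1 := by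
    intro a x; by_cases h : g x = a <;> simp [hχdef, h]
  have hχ0 : ∀ a x, 0 ≤ χ a x := by
    intro a x; by_cases h : g x = a <;> simp [hχdef, h]
  -- the conditional laws
  set A : G → Set Ω := fun a => {ω | g (X ω) = a} with hAdef
  set ρ : G → Measure ℝ := fun a => (μ[|A a]).map (fun ω => p (X ω)) with hρdef
  have hμA0 : ∀ a, μ (A a) ≠ 0 := fun a => (hgpos a).ne'
  have hμAtop : ∀ a, μ (A a) ≠ ⊤ := fun a => measure_ne_top μ _
  have hprob : ∀ a, IsProbabilityMeasure (ρ a) := by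
    intro a
    haveI := cond_isProbabilityMeasure (μ := μ) (hμA0 a)
    exact Measure.isProbabilityMeasure_map hpX.aemeasurable
  have hfin : ∀ a, IsFiniteMeasure (ρ a) := fun a => haveI := hprob a; inferInstance
  have hac : ∀ a, ρ a ≪ volume := by
    intro a
    obtain ⟨φ, hφ, -, -⟩ := hdens a
    rw [hρdef]
    simp only
    rw [show (μ[|A a]).map (fun ω => p (X ω))
        = Measure.map (fun ω => p (X ω)) (ProbabilityTheory.cond μ {ω | g (X ω) = a}) from rfl]
    rw [hφ]
    exact withDensity_absolutelyContinuous _ _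
  have hsupp0 : ∀ a, ρ a (Iio 0) = 0 := by
    intro a
    rw [hρdef]
    simp only
    rw [Measure.map_apply hpX measurableSet_Iio]
    have : (fun ω => p (X ω)) ⁻¹' Iio 0 = ∅ := by
      ext ω; simp only [mem_preimage, mem_Iio, mem_empty_iff_false, iff_false, not_lt]
      exact (hp01 _).1
    rw [this]; simp
  have hsupp1 : ∀ a, ρ a (Ioi 1) = 0 := by
    intro a
    rw [hρdef]
    simp only
    rw [Measure.map_apply hpX measurableSet_Ioi]
    have : (fun ω => p (X ω)) ⁻¹' Ioi 1 = ∅ := by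
      ext ω; simp only [mem_preimage, mem_Ioi, mem_empty_iff_false, iff_false, not_lt]
      exact (hp01 _).2
    rw [this]; simp
  have hatom : ∀ a (x : ℝ), ρ a {x} = 0 := fun a x => hac a Real.volume_singleton
  -- weights
  set w : G → ℝ := fun a => (μ (A a)).toReal with hwdef
  have hw : ∀ a, 0 < w a := fun a => ENNReal.toReal_pos (hμA0 a) (hμAtop a)
  -- transfer from Ω to ρ a
  have transfer : ∀ (a : G) (h : ℝ → ℝ), Measurable h → ∀ C : ℝ, (∀ s, |h s| ≤ C) →
      ∫ ω, χ a (X ω) * h (p (X ω)) ∂μ = w a * ∫ s, h s ∂(ρ a) := by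
    intro a h hh C hb
    have hmap : ∫ s, h s ∂(ρ a) = ∫ ω, h (p (X ω)) ∂(μ[|A a]) :=
      integral_map hpX.aemeasurable hh.aestronglyMeasurable
    have hcond : (μ[|A a]) = (μ (A a))⁻¹ • μ.restrict (A a) := rfl
    rw [hmap, hcond, integral_smul_measure, ENNReal.toReal_inv, smul_eq_mul, ← mul_assoc,
      mul_inv_cancel₀ (hw a).ne', one_mul]
    rw [← integral_indicator (hA a)]
    refine integral_congr_ae (Filter.Eventually.of_forall fun ω => ?_)
    by_cases hga : g (X ω) = a
    · have : ω ∈ A a := hga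
      simp [hχdef, hga, indicator, this]
    · have : ω ∉ A a := hga
      simp [hχdef, hga, indicator, this]
  -- replace Y by p
  have hYb : ∀ ω, |Y ω| ≤ 1 := by
    intro ω; rcases hY01 ω with h | h <;> simp [h]
  have hpb : ∀ x, |p x| ≤ 1 := by
    intro x; rw [abs_le]; exact ⟨by linarith [(hp01 x).1], (hp01 x).2⟩
  have hsub : ∀ f : 𝒳 → ℝ, Measurable f → ∀ C : ℝ, (∀ x, |f x| ≤ C) →
      ∫ ω, (1 - Y ω) * f (X ω) ∂μ = ∫ ω, (1 - p (X ω)) * f (X ω) ∂μ := by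
    intro f hf C hb
    have h1 : Integrable (fun ω => f (X ω)) μ := aux_int μ (hf.comp hX) fun ω => hb _
    have h2 : Integrable (fun ω => Y ω * f (X ω)) μ := by
      refine aux_int μ (hY.mul (hf.comp hX)) (C := 1 * C) fun ω => ?_
      rw [abs_mul]
      exact mul_le_mul (hYb ω) (hb _) (abs_nonneg _) zero_le_one
    have h3 : Integrable (fun ω => p (X ω) * f (X ω)) μ := by
      refine aux_int μ ((hp.comp hX).mul (hf.comp hX)) (C := 1 * C) fun ω => ?_
      rw [abs_mul]
      exact mul_le_mul (hpb _) (hb _) (abs_nonneg _) zero_le_one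
    simp only [sub_mul, one_mul]
    rw [integral_sub h1 h2, integral_sub h1 h3, hrisk f hf ⟨C, hb⟩]
  -- set integral over {Y=0 ∧ g = a} as plain integral
  have T1 : ∀ (a : G) (q : 𝒳 → ℝ), Measurable q → ∀ C : ℝ, (∀ x, |q x| ≤ C) →
      ∫ ω in {ω | Y ω = 0 ∧ g (X ω) = a}, q (X ω) ∂μ
        = ∫ ω, χ a (X ω) * ((1 - p (X ω)) * q (X ω)) ∂μ := by
    intro a q hq C hb
    have hCnn : 0 ≤ C := le_trans (abs_nonneg _) (hb (X ω₀))
    have step1 : ∫ ω in {ω | Y ω = 0 ∧ g (X ω) = a}, q (X ω) ∂μ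
        = ∫ ω, (1 - Y ω) * (χ a (X ω) * q (X ω)) ∂μ := by
      rw [← integral_indicator (hS0 a)]
      refine integral_congr_ae (Filter.Eventually.of_forall fun ω => ?_)
      rcases hY01 ω with h0 | h1
      · by_cases hga : g (X ω) = a
        · have hmem : ω ∈ {ω | Y ω = 0 ∧ g (X ω) = a} := ⟨h0, hga⟩
          simp [indicator, hmem, h0, hχdef, hga]
        · have hmem : ω ∉ {ω | Y ω = 0 ∧ g (X ω) = a} := fun hh => hga hh.2
          simp [indicator, hmem, h0, hχdef, hga]
      · have hmem : ω ∉ {ω | Y ω = 0 ∧ g (X ω) = a} := fun hh =>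
          one_ne_zero (h1.symm.trans hh.1)
        simp [indicator, hmem, h1]
    rw [step1, hsub (fun x => χ a x * q x) ((hχm a).mul hq) (1 * C)
      (fun x => by rw [abs_mul]; exact mul_le_mul (hχb a x) (hb x) (abs_nonneg _) zero_le_one)]
    refine integral_congr_ae (Filter.Eventually.of_forall fun ω => ?_)
    ring
  have T1g : ∀ q : 𝒳 → ℝ, Measurable q → ∀ C : ℝ, (∀ x, |q x| ≤ C) →
      ∫ ω in {ω | Y ω = 0}, q (X ω) ∂μ = ∫ ω, (1 - p (X ω)) * q (X ω) ∂μ := by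
    intro q hq C hb
    have step1 : ∫ ω in {ω | Y ω = 0}, q (X ω) ∂μ = ∫ ω, (1 - Y ω) * q (X ω) ∂μ := by
      rw [← integral_indicator hY0m]
      refine integral_congr_ae (Filter.Eventually.of_forall fun ω => ?_)
      rcases hY01 ω with h0 | h1
      · have hmem : ω ∈ {ω | Y ω = 0} := h0
        simp [indicator, hmem, h0]
      · have hmem : ω ∉ {ω | Y ω = 0} := fun hh =>
          one_ne_zero (h1.symm.trans hh)
        simp [indicator, hmem, h1]
    rw [step1, hsub q hq C hb]
  -- decomposition over groups
  have decomp : ∀ F : Ω → ℝ, Measurable F → ∀ C : ℝ, (∀ ω, |F ω| ≤ C) →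
      ∫ ω, F ω ∂μ = ∑ a : G, ∫ ω, χ a (X ω) * F ω ∂μ := by
    intro F hF C hb
    have hptw : ∀ ω, F ω = ∑ a : G, χ a (X ω) * F ω := by
      intro ω
      have : ∀ a : G, χ a (X ω) * F ω = if g (X ω) = a then F ω else 0 := by
        intro a; by_cases h : g (X ω) = a <;> simp [hχdef, h]
      rw [Finset.sum_congr rfl fun a _ => this a]
      rw [Finset.sum_ite_eq Finset.univ (g (X ω)) fun _ => F ω]
      simp
    calc ∫ ω, F ω ∂μ = ∫ ω, ∑ a : G, χ a (X ω) * F ω ∂μ :=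
          integral_congr_ae (Filter.Eventually.of_forall fun ω => hptw ω)
      _ = ∑ a : G, ∫ ω, χ a (X ω) * F ω ∂μ := by
          refine integral_finset_sum _ fun a _ => ?_
          refine aux_int μ ((hχm a).comp hX |>.mul hF) (C := 1 * C) fun ω => ?_
          rw [abs_mul]
          exact mul_le_mul (hχb a _) (hb ω) (abs_nonneg _) zero_le_one
  -- real-side integrand functions (clamped so they are globally bounded)
  set q1 : ℝ → ℝ := fun s => 1 - max 0 (min 1 s) with hq1def
  set q2 : ℝ → ℝ := fun s => max 0 (min 1 s) - c with hq2def
  have hclamp : ∀ x : 𝒳, max 0 (min 1 (p x)) = p x := by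
    intro x
    rw [min_eq_right (hp01 x).2, max_eq_right (hp01 x).1]
  have hclampmem : ∀ s : ℝ, max 0 (min 1 s) ∈ Icc (0:ℝ) 1 := by
    intro s
    constructor
    · exact le_max_left _ _
    · exact max_le zero_le_one (min_le_left _ _)
  have hq1m : Measurable q1 :=
    (continuous_const.sub (continuous_const.max (continuous_const.min continuous_id))).measurable
  have hq2m : Measurable q2 :=
    ((continuous_const.max (continuous_const.min continuous_id)).sub continuous_const).measurable
  have hq1b : ∀ s, |q1 s| ≤ 1 := by
    intro s
    obtain ⟨hl, hr⟩ := hclampmem s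
    simp only [hq1def]
    rw [abs_le]
    constructor <;> linarith
  have hq2b : ∀ s, |q2 s| ≤ 2 := by
    intro s
    obtain ⟨hl, hr⟩ := hclampmem s
    simp only [hq2def]
    rw [abs_le]
    constructor <;> linarith
  have hq1p : ∀ x : 𝒳, q1 (p x) = 1 - p x := by intro x; rw [hq1def]; simp only [hclamp]
  have hq2p : ∀ x : 𝒳, q2 (p x) = p x - c := by intro x; rw [hq2def]; simp only [hclamp]
  have hq10 : ∀ s, 0 ≤ q1 s := by intro s; simp only [hq1def]; linarith [(hclampmem s).2]
  -- the FPR and utility threshold functions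
  set G1 : G → ℝ → ℝ := fun a t => ∫ s in Ici t, q1 s ∂(ρ a) with hG1def
  set G2 : G → ℝ → ℝ := fun a t => ∫ s in Ici t, q2 s ∂(ρ a) with hG2def
  set M : G → ℝ := fun a => G1 a 0 with hMdef
  set fa : G → ℝ → ℝ := fun a t => G1 a t / M a with hfadef
  have hG1c : ∀ a, Continuous (G1 a) := fun a =>
    haveI := hfin a; aux_cont (ρ a) (hac a) q1 hq1m 1 hq1b
  have hG2c : ∀ a, Continuous (G2 a) := fun a =>
    haveI := hfin a; aux_cont (ρ a) (hac a) q2 hq2m 2 hq2b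
  have hG1at1 : ∀ a, G1 a 1 = 0 := fun a => aux_Ici1 (ρ a) (hsupp1 a) (hatom a 1) q1
  have hG2at1 : ∀ a, G2 a 1 = 0 := fun a => aux_Ici1 (ρ a) (hsupp1 a) (hatom a 1) q2
  have hG1nonneg : ∀ a t, 0 ≤ G1 a t := fun a t =>
    setIntegral_nonneg measurableSet_Ici fun s _ => hq10 s
  have hG1leM : ∀ a t, G1 a t ≤ M a := by
    intro a t
    haveI := hfin a
    rw [hMdef]
    simp only [hG1def]
    rw [aux_total (ρ a) (hsupp0 a) q1 hq1m 1 hq1b]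
    exact setIntegral_le_integral (aux_int (ρ a) hq1m hq1b)
      (Filter.Eventually.of_forall hq10)
  -- relating masses
  have hNa : ∀ a, (μ {ω | Y ω = 0 ∧ g (X ω) = a}).toReal = w a * M a := by
    intro a
    haveI := hfin a
    have h1 : (μ {ω | Y ω = 0 ∧ g (X ω) = a}).toReal
        = ∫ ω in {ω | Y ω = 0 ∧ g (X ω) = a}, (fun _ : 𝒳 => (1:ℝ)) (X ω) ∂μ := by
      simp
      rfl
    rw [h1, T1 a (fun _ => 1) measurable_const 1 (by intro x; simp)]
    have h2 : ∫ ω, χ a (X ω) * ((1 - p (X ω)) * 1) ∂μ = ∫ ω, χ a (X ω) * q1 (p (X ω)) ∂μ := by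
      refine integral_congr_ae (Filter.Eventually.of_forall fun ω => ?_)
      show χ a (X ω) * ((1 - p (X ω)) * 1) = χ a (X ω) * q1 (p (X ω))
      rw [hq1p]; ring
    rw [h2, transfer a q1 hq1m 1 hq1b]
    congr 1
    rw [hMdef]
    simp only [hG1def]
    rw [aux_total (ρ a) (hsupp0 a) q1 hq1m 1 hq1b]
  have hMpos : ∀ a, 0 < M a := by
    intro a
    have h1 : 0 < (μ {ω | Y ω = 0 ∧ g (X ω) = a}).toReal :=
      ENNReal.toReal_pos (hY0pos a).ne' (measure_ne_top μ _)
    rw [hNa a] at h1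
    by_contra hM
    push_neg at hM
    nlinarith [mul_nonpos_of_nonneg_of_nonpos (hw a).le hM]
  have hfa0 : ∀ a, fa a 0 = 1 := by
    intro a
    have hM := hMpos a
    simp only [hfadef, hMdef] at hM ⊢
    exact div_self hM.ne'
  have hfa1 : ∀ a, fa a 1 = 0 := by
    intro a
    simp only [hfadef, hG1at1 a, zero_div]
  have hfac : ∀ a, Continuous (fa a) := by
    intro a
    simp only [hfadef]
    exact (hG1c a).div_const _
  have hfa01 : ∀ a t, fa a t ∈ Icc (0:ℝ) 1 := by
    intro a t
    constructor
    · exact div_nonneg (hG1nonneg a t) (hMpos a).le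
    · rw [div_le_one (hMpos a)]
      exact hG1leM a t
  have hG1fa : ∀ a t, G1 a t = M a * fa a t := by
    intro a t
    simp only [hfadef]
    rw [mul_div_cancel₀ _ (hMpos a).ne']
  -- threshold integrals
  have thresh1 : ∀ (a : G) (τ : G → ℝ),
      ∫ ω, χ a (X ω) * ((1 - p (X ω)) * (if τ (g (X ω)) ≤ p (X ω) then (1:ℝ) else 0)) ∂μ
        = w a * G1 a (τ a) := by
    intro a τ
    have hmh : Measurable fun s : ℝ => q1 s * (if τ a ≤ s then 1 else 0) :=
      hq1m.mul (Measurable.ite measurableSet_Ici measurable_const measurable_const)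
    have hbh : ∀ s : ℝ, |q1 s * (if τ a ≤ s then 1 else 0)| ≤ 1 := by
      intro s
      rw [abs_mul]
      calc |q1 s| * |if τ a ≤ s then (1:ℝ) else 0| ≤ 1 * 1 := by
            refine mul_le_mul (hq1b s) ?_ (abs_nonneg _) zero_le_one
            split_ifs <;> simp
        _ = 1 := one_mul 1
    have hpt : ∀ ω, χ a (X ω) * ((1 - p (X ω)) * (if τ (g (X ω)) ≤ p (X ω) then (1:ℝ) else 0))
        = χ a (X ω) * ((fun s => q1 s * (if τ a ≤ s then 1 else 0)) (p (X ω))) := by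
      intro ω
      by_cases hga : g (X ω) = a
      · simp only [hga, hq1p]
      · simp [hχdef, hga]
    rw [integral_congr_ae (Filter.Eventually.of_forall hpt),
      transfer a _ hmh 1 hbh]
    congr 1
    haveI := hfin a
    rw [aux_ind (ρ a) q1 (τ a)]
  have thresh2 : ∀ (a : G) (τ : G → ℝ),
      ∫ ω, χ a (X ω) * ((p (X ω) - c) * (if τ (g (X ω)) ≤ p (X ω) then (1:ℝ) else 0)) ∂μ
        = w a * G2 a (τ a) := by
    intro a τ
    have hmh : Measurable fun s : ℝ => q2 s * (if τ a ≤ s then 1 else 0) :=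
      hq2m.mul (Measurable.ite measurableSet_Ici measurable_const measurable_const)
    have hbh : ∀ s : ℝ, |q2 s * (if τ a ≤ s then 1 else 0)| ≤ 2 := by
      intro s
      rw [abs_mul]
      calc |q2 s| * |if τ a ≤ s then (1:ℝ) else 0| ≤ 2 * 1 := by
            refine mul_le_mul (hq2b s) ?_ (abs_nonneg _) (by norm_num)
            split_ifs <;> simp
        _ = 2 := by norm_num
    have hpt : ∀ ω, χ a (X ω) * ((p (X ω) - c) * (if τ (g (X ω)) ≤ p (X ω) then (1:ℝ) else 0))
        = χ a (X ω) * ((fun s => q2 s * (if τ a ≤ s then 1 else 0)) (p (X ω))) := by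
      intro ω
      by_cases hga : g (X ω) = a
      · simp only [hga, hq2p]
      · simp [hχdef, hga]
    rw [integral_congr_ae (Filter.Eventually.of_forall hpt),
      transfer a _ hmh 2 hbh]
    congr 1
    haveI := hfin a
    rw [aux_ind (ρ a) q2 (τ a)]
  -- mass identities
  have E1 : ∀ a, ∫ ω, χ a (X ω) * ((1 - p (X ω)) * 1) ∂μ = w a * M a := by
    intro a
    rw [← T1 a (fun _ => 1) measurable_const 1 (by intro x; simp), ← hNa a]
    simp
    rfl
  have hN0 : (μ {ω | Y ω = 0}).toReal = ∑ a : G, w a * M a := by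
    have h1 : (μ {ω | Y ω = 0}).toReal
        = ∫ ω in {ω | Y ω = 0}, (fun _ : 𝒳 => (1:ℝ)) (X ω) ∂μ := by simp; rfl
    rw [h1, T1g (fun _ => 1) measurable_const 1 (by intro x; simp)]
    have hmF : Measurable fun ω => (1 - p (X ω)) * (fun _ : 𝒳 => (1:ℝ)) (X ω) :=
      (measurable_const.sub hpX).mul measurable_const
    have hbF : ∀ ω, |(1 - p (X ω)) * (fun _ : 𝒳 => (1:ℝ)) (X ω)| ≤ 1 := by
      intro ω
      simp only [mul_one]
      rw [abs_le]
      exact ⟨by linarith [(hp01 (X ω)).2], by linarith [(hp01 (X ω)).1]⟩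
    rw [decomp _ hmF 1 hbF]
    exact Finset.sum_congr rfl fun a _ => E1 a
  have hN0pos : 0 < ∑ a : G, w a * M a :=
    Finset.sum_pos (fun b _ => mul_pos (hw b) (hMpos b)) Finset.univ_nonempty
  -- compact feasible set of thresholds and a maximizer
  set Kset : Set (G → ℝ) :=
    (Set.pi univ fun _ : G => Icc (0:ℝ) 1) ∩ {τ | ∀ a, fa a (τ a) = fa a₀ (τ a₀)} with hKdef
  have hKclosed : IsClosed {τ : G → ℝ | ∀ a, fa a (τ a) = fa a₀ (τ a₀)} := by
    have : {τ : G → ℝ | ∀ a, fa a (τ a) = fa a₀ (τ a₀)}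
        = ⋂ a : G, {τ : G → ℝ | fa a (τ a) = fa a₀ (τ a₀)} := by
      ext τ; simp [mem_iInter]
    rw [this]
    exact isClosed_iInter fun a => isClosed_eq
      ((hfac a).comp (continuous_apply a)) ((hfac a₀).comp (continuous_apply a₀))
  have hKc : IsCompact Kset :=
    IsCompact.inter_right (isCompact_univ_pi fun _ => isCompact_Icc) hKclosed
  have hKne : Kset.Nonempty := by
    refine ⟨fun _ => 0, ⟨fun a _ => ⟨le_refl 0, zero_le_one⟩, fun a => ?_⟩⟩
    rw [hfa0 a, hfa0 a₀]
  set U : (G → ℝ) → ℝ := fun τ => ∑ a : G, w a * G2 a (τ a) with hUdef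
  have hUc : Continuous U := by
    refine continuous_finset_sum _ fun a _ => ?_
    exact continuous_const.mul ((hG2c a).comp (continuous_apply a))
  obtain ⟨T, hTK, hTmax⟩ := hKc.exists_isMaxOn hKne hUc.continuousOn
  have hT01 : ∀ a, T a ∈ Icc (0:ℝ) 1 := fun a => hTK.1 a (mem_univ a)
  set rstar := fa a₀ (T a₀) with hrstardef
  have hTfa : ∀ a, fa a (T a) = rstar := fun a => hTK.2 a
  -- set-integral values for threshold rules
  have hnum : ∀ (a : G) (τ : G → ℝ),
      ∫ ω in {ω | Y ω = 0 ∧ g (X ω) = a}, (if τ (g (X ω)) ≤ p (X ω) then (1:ℝ) else 0) ∂μ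
        = w a * G1 a (τ a) := by
    intro a τ
    rw [T1 a _ (hDm τ) 1 (hDb τ)]
    exact thresh1 a τ
  have hnumg : ∀ τ : G → ℝ,
      ∫ ω in {ω | Y ω = 0}, (if τ (g (X ω)) ≤ p (X ω) then (1:ℝ) else 0) ∂μ
        = ∑ a : G, w a * G1 a (τ a) := by
    intro τ
    rw [T1g _ (hDm τ) 1 (hDb τ)]
    have hmF : Measurable fun ω =>
        (1 - p (X ω)) * (fun x => if τ (g x) ≤ p x then (1:ℝ) else 0) (X ω) :=
      (measurable_const.sub hpX).mul ((hDm τ).comp hX)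
    have hbF : ∀ ω, |(1 - p (X ω)) * (fun x => if τ (g x) ≤ p x then (1:ℝ) else 0) (X ω)| ≤ 1 := by
      intro ω
      rw [abs_mul]
      have h5 : |1 - p (X ω)| ≤ 1 := by
        rw [abs_le]
        exact ⟨by linarith [(hp01 (X ω)).2], by linarith [(hp01 (X ω)).1]⟩
      calc |1 - p (X ω)| * |(fun x => if τ (g x) ≤ p x then (1:ℝ) else 0) (X ω)|
          ≤ 1 * 1 := mul_le_mul h5 (hDb τ (X ω)) (abs_nonneg _) zero_le_one
        _ = 1 := one_mul 1
    rw [decomp _ hmF 1 hbF]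
    exact Finset.sum_congr rfl fun a _ => thresh1 a τ
  have hWM0 : ∀ a, (w a * M a) ≠ 0 := fun a => (mul_pos (hw a) (hMpos a)).ne'
  refine ⟨T, hT01, ?_, ?_⟩
  · -- predictive equality of the threshold rule
    intro a
    rw [hnum a T, hnumg T, hNa a, hN0]
    have hL : w a * G1 a (T a) = (w a * M a) * rstar := by
      rw [hG1fa a (T a), hTfa a]; ring
    rw [hL, Finset.sum_congr rfl fun b _ => show w b * G1 b (T b) = (w b * M b) * rstar by
      rw [hG1fa b (T b), hTfa b]; ring, ← Finset.sum_mul]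
    rw [mul_comm (w a * M a) rstar, mul_div_assoc, div_self (hWM0 a), mul_one]
    rw [mul_comm (∑ b : G, w b * M b) rstar, mul_div_assoc, div_self hN0pos.ne', mul_one]
  · -- optimality
    intro d hd hd01 hPE
    have hdb : ∀ x, |d x| ≤ 1 := fun x => abs_le.mpr ⟨by linarith [(hd01 x).1], (hd01 x).2⟩
    have Vform : ∀ q : 𝒳 → ℝ, Measurable q → (∀ x, |q x| ≤ 1) →
        (∫ ω, Y ω * q (X ω) ∂μ) - c * ∫ ω, q (X ω) ∂μ
          = ∫ ω, (p (X ω) - c) * q (X ω) ∂μ := by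
      intro q hq hb
      rw [hrisk q hq ⟨1, hb⟩]
      have h1 : Integrable (fun ω => p (X ω) * q (X ω)) μ :=
        aux_int μ (hpX.mul (hq.comp hX)) (C := 1) fun ω => by
          rw [abs_mul]
          calc |p (X ω)| * |q (X ω)| ≤ 1 * 1 :=
                mul_le_mul (hpb _) (hb _) (abs_nonneg _) zero_le_one
            _ = 1 := one_mul 1
      have h2 : Integrable (fun ω => c * q (X ω)) μ :=
        aux_int μ (measurable_const.mul (hq.comp hX)) (C := |c| * 1) fun ω => by
          rw [abs_mul]
          exact mul_le_mul_of_nonneg_left (hb _) (abs_nonneg c)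
      rw [← integral_const_mul c, ← integral_sub h1 h2]
      refine integral_congr_ae (Filter.Eventually.of_forall fun ω => ?_)
      ring
    have VD : (∫ ω, Y ω * (if T (g (X ω)) ≤ p (X ω) then (1:ℝ) else 0) ∂μ)
          - c * ∫ ω, (if T (g (X ω)) ≤ p (X ω) then (1:ℝ) else 0) ∂μ
        = ∫ ω, (p (X ω) - c) * (if T (g (X ω)) ≤ p (X ω) then (1:ℝ) else 0) ∂μ :=
      Vform _ (hDm T) (hDb T)
    have hbnd2 : ∀ (u : ℝ), |u| ≤ 1 → ∀ v : ℝ, |v| ≤ 1 → ∀ z : ℝ, |z| ≤ 2 → |u * (z * v)| ≤ 2 := by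
      intro u hu v hv z hz
      rw [abs_mul, abs_mul]
      calc |u| * (|z| * |v|) ≤ 1 * (2 * 1) := by
            refine mul_le_mul hu ?_ (by positivity) zero_le_one
            exact mul_le_mul hz hv (abs_nonneg _) (by norm_num)
        _ = 2 := by norm_num
    have hpcb : ∀ ω, |p (X ω) - c| ≤ 2 := by
      intro ω
      rw [abs_le]
      exact ⟨by linarith [(hp01 (X ω)).1], by linarith [(hp01 (X ω)).2]⟩
    have VTval : ∀ τ : G → ℝ,
        ∫ ω, (p (X ω) - c) * (if τ (g (X ω)) ≤ p (X ω) then (1:ℝ) else 0) ∂μ = U τ := by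
      intro τ
      have hmF : Measurable fun ω =>
          (p (X ω) - c) * (fun x => if τ (g x) ≤ p x then (1:ℝ) else 0) (X ω) :=
        (hpX.sub measurable_const).mul ((hDm τ).comp hX)
      have hbF : ∀ ω, |(p (X ω) - c) * (fun x => if τ (g x) ≤ p x then (1:ℝ) else 0) (X ω)| ≤ 2 := by
        intro ω
        rw [abs_mul]
        calc |p (X ω) - c| * |(fun x => if τ (g x) ≤ p x then (1:ℝ) else 0) (X ω)| ≤ 2 * 1 :=
              mul_le_mul (hpcb ω) (hDb τ (X ω)) (abs_nonneg _) (by norm_num)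
          _ = 2 := by norm_num
      rw [show (∫ ω, (p (X ω) - c) * (if τ (g (X ω)) ≤ p (X ω) then (1:ℝ) else 0) ∂μ)
          = ∫ ω, (fun ω => (p (X ω) - c) * (fun x => if τ (g x) ≤ p x then (1:ℝ) else 0) (X ω)) ω ∂μ
          from rfl]
      rw [decomp _ hmF 2 hbF, hUdef]
      exact Finset.sum_congr rfl fun a _ => thresh2 a τ
    -- the common false-positive rate of d
    set rd := (∫ ω in {ω | Y ω = 0}, d (X ω) ∂μ) / (μ {ω | Y ω = 0}).toReal with hrddef
    have hPEa : ∀ a, ∫ ω in {ω | Y ω = 0 ∧ g (X ω) = a}, d (X ω) ∂μ = (w a * M a) * rd := by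
      intro a
      have h := hPE a
      rw [← hrddef, hNa a, div_eq_iff (hWM0 a)] at h
      rw [h]; ring
    have hFPRa : ∀ a, ∫ ω, χ a (X ω) * ((1 - p (X ω)) * d (X ω)) ∂μ = (w a * M a) * rd := by
      intro a
      rw [← T1 a d hd 1 hdb]
      exact hPEa a
    have hint_chi_d : ∀ a, Integrable (fun ω => χ a (X ω) * ((1 - p (X ω)) * d (X ω))) μ := by
      intro a
      refine aux_int μ (((hχm a).comp hX).mul ((measurable_const.sub hpX).mul (hd.comp hX))) (C := 2)
        fun ω => hbnd2 _ (hχb a _) _ (hdb _) _ ?_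
      rw [abs_le]
      exact ⟨by linarith [(hp01 (X ω)).2], by linarith [(hp01 (X ω)).1]⟩
    have hEnn : 0 ≤ ∫ ω, χ a₀ (X ω) * ((1 - p (X ω)) * d (X ω)) ∂μ :=
      integral_nonneg fun ω => mul_nonneg (hχ0 _ _)
        (mul_nonneg (by linarith [(hp01 (X ω)).2]) (hd01 _).1)
    have hEle : ∫ ω, χ a₀ (X ω) * ((1 - p (X ω)) * d (X ω)) ∂μ ≤ w a₀ * M a₀ := by
      rw [← E1 a₀]
      refine integral_mono (hint_chi_d a₀) ?_ fun ω => ?_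
      · refine aux_int μ (((hχm a₀).comp hX).mul ((measurable_const.sub hpX).mul measurable_const))
          (C := 2) fun ω => hbnd2 _ (hχb a₀ _) _ (by norm_num) _ ?_
        rw [abs_le]
        exact ⟨by linarith [(hp01 (X ω)).2], by linarith [(hp01 (X ω)).1]⟩
      · refine mul_le_mul_of_nonneg_left ?_ (hχ0 a₀ _)
        have h1p : 0 ≤ 1 - p (X ω) := by linarith [(hp01 (X ω)).2]
        nlinarith [(hd01 (X ω)).2]
    have hrd0 : 0 ≤ rd := by
      by_contra hneg
      push_neg at hneg
      have h := hFPRa a₀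
      nlinarith [hEnn, mul_pos (hw a₀) (hMpos a₀)]
    have hrd1 : rd ≤ 1 := by
      by_contra hgt
      push_neg at hgt
      have h := hFPRa a₀
      nlinarith [hEle, mul_pos (hw a₀) (hMpos a₀)]
    have hint_chi_pcd : ∀ a, Integrable (fun ω => χ a (X ω) * ((p (X ω) - c) * d (X ω))) μ := by
      intro a
      exact aux_int μ (((hχm a).comp hX).mul ((hpX.sub measurable_const).mul (hd.comp hX))) (C := 2)
        fun ω => hbnd2 _ (hχb a _) _ (hdb _) _ (hpcb ω)
    by_cases hrdz : rd = 0
    · -- degenerate case : all group FPRs are zero, both utilities compared through 0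
      have hzero : ∀ a, ∫ ω, χ a (X ω) * ((1 - p (X ω)) * d (X ω)) ∂μ = 0 := fun a => by
        rw [hFPRa a, hrdz, mul_zero]
      have hm1pd : Measurable fun ω => (1 - p (X ω)) * d (X ω) :=
        (measurable_const.sub hpX).mul (hd.comp hX)
      have hb1pd : ∀ ω, |(1 - p (X ω)) * d (X ω)| ≤ 1 := by
        intro ω
        rw [abs_mul]
        calc |1 - p (X ω)| * |d (X ω)| ≤ 1 * 1 := by
              refine mul_le_mul ?_ (hdb _) (abs_nonneg _) zero_le_one
              rw [abs_le]
              exact ⟨by linarith [(hp01 (X ω)).2], by linarith [(hp01 (X ω)).1]⟩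
          _ = 1 := one_mul 1
      have hsum0 : ∫ ω, (1 - p (X ω)) * d (X ω) ∂μ = 0 := by
        rw [decomp _ hm1pd 1 hb1pd]
        exact Finset.sum_eq_zero fun a _ => hzero a
      have hnonneg : 0 ≤ᵐ[μ] fun ω => (1 - p (X ω)) * d (X ω) :=
        Filter.Eventually.of_forall fun ω =>
          mul_nonneg (by linarith [(hp01 (X ω)).2]) (hd01 _).1
      have hae0 : (fun ω => (1 - p (X ω)) * d (X ω)) =ᵐ[μ] 0 :=
        (integral_eq_zero_iff_of_nonneg_ae hnonneg (aux_int μ hm1pd hb1pd)).mp hsum0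
      have hp1 : μ {ω | p (X ω) = 1} = 0 := by
        have hsub1 : {ω | p (X ω) = 1} ⊆ ⋃ a ∈ (Finset.univ : Finset G), (A a ∩ {ω | p (X ω) = 1}) := by
          intro ω hω
          simp only [Finset.mem_univ, iUnion_true, mem_iUnion]
          exact ⟨g (X ω), rfl, hω⟩
        refine measure_mono_null hsub1 ?_
        refine le_antisymm (le_trans (measure_biUnion_finset_le _ _) ?_) zero_le
        have hzero2 : ∀ a : G, μ (A a ∩ {ω | p (X ω) = 1}) = 0 := by
          intro a
          have hr : ρ a {(1:ℝ)} = 0 := hatom a 1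
          rw [hρdef] at hr
          simp only at hr
          rw [Measure.map_apply hpX (measurableSet_singleton 1)] at hr
          rw [cond_apply (hA a) μ] at hr
          rcases mul_eq_zero.mp hr with h | h
          · exact absurd h (ENNReal.inv_ne_zero.mpr (hμAtop a))
          · exact h
        simp [hzero2]
      have haene1 : ∀ᵐ ω ∂μ, p (X ω) ≠ 1 := by
        rw [ae_iff]
        simpa using hp1
      have hdae : (fun ω => d (X ω)) =ᵐ[μ] 0 := by
        filter_upwards [hae0, haene1] with ω h1 h2
        have h1p : 1 - p (X ω) ≠ 0 := fun hcon => h2 (by linarith [sub_eq_zero.mp hcon])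
        have := mul_eq_zero.mp h1
        rcases this with h | h
        · exact absurd h h1p
        · exact h
      have hVd0 : ∫ ω, (p (X ω) - c) * d (X ω) ∂μ = 0 := by
        have heq : (fun ω => (p (X ω) - c) * d (X ω)) =ᵐ[μ] 0 := by
          filter_upwards [hdae] with ω h
          simp only [Pi.zero_apply] at h ⊢
          rw [h, mul_zero]
        rw [integral_congr_ae heq]
        simp
      have hUT0 : 0 ≤ U T := by
        have h1vec : (fun _ : G => (1:ℝ)) ∈ Kset :=
          ⟨fun a _ => ⟨zero_le_one, le_refl 1⟩, fun a => by
            show fa a 1 = fa a₀ 1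
            rw [hfa1 a, hfa1 a₀]⟩
        have hle : U (fun _ : G => (1:ℝ)) ≤ U T := hTmax h1vec
        have hU1 : U (fun _ : G => (1:ℝ)) = 0 := by
          rw [hUdef]
          exact Finset.sum_eq_zero fun a _ => by rw [hG2at1 a, mul_zero]
        rw [hU1] at hle
        exact hle
      rw [Vform d hd hdb, VD, VTval T, hVd0]
      exact hUT0
    · -- main case : rd > 0, compare with the threshold rule at level rd
      have hrdpos : 0 < rd := lt_of_le_of_ne hrd0 (Ne.symm hrdz)
      have hIVT : ∀ a, ∃ t ∈ Icc (0:ℝ) 1, fa a t = rd := by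
        intro a
        have hsub2 : Icc (fa a 1) (fa a 0) ⊆ fa a '' Icc 0 1 :=
          intermediate_value_Icc' zero_le_one (hfac a).continuousOn
        have hrdmem : rd ∈ Icc (fa a 1) (fa a 0) := by
          rw [hfa1 a, hfa0 a]; exact ⟨hrd0, hrd1⟩
        obtain ⟨t, htm, htv⟩ := hsub2 hrdmem
        exact ⟨t, htm, htv⟩
      choose t' ht'm ht'v using hIVT
      have ht'lt1 : ∀ a, t' a < 1 := by
        intro a
        rcases lt_or_eq_of_le (ht'm a).2 with h | h
        · exact h
        · exfalso
          have h2 := ht'v a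
          rw [h, hfa1 a] at h2
          exact hrdz h2.symm
      have ht'K : t' ∈ Kset := ⟨fun a _ => ht'm a, fun a => by rw [ht'v a, ht'v a₀]⟩
      have key : ∀ a, ∫ ω, χ a (X ω) * ((p (X ω) - c) * d (X ω)) ∂μ ≤ w a * G2 a (t' a) := by
        intro a
        set κ := (t' a - c) / (1 - t' a) with hκdef
        have hD'b2 : ∀ ω, |(if t' (g (X ω)) ≤ p (X ω) then (1:ℝ) else 0) - d (X ω)| ≤ 2 := by
          intro ω
          have h1 := hDb t' (X ω)
          have h2 := hdb (X ω)
          rw [abs_le] at h1 h2 ⊢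
          constructor <;> [linarith [h1.1, h2.2]; linarith [h1.2, h2.1]]
        have hpt : ∀ ω, κ * (χ a (X ω) * ((1 - p (X ω)) *
              ((if t' (g (X ω)) ≤ p (X ω) then (1:ℝ) else 0) - d (X ω))))
            ≤ χ a (X ω) * ((p (X ω) - c) *
              ((if t' (g (X ω)) ≤ p (X ω) then (1:ℝ) else 0) - d (X ω))) := by
          intro ω
          by_cases hga : g (X ω) = a
          · have hχ1 : χ a (X ω) = 1 := by simp [hχdef, hga]
            rw [hχ1, one_mul, one_mul, hga, hκdef]
            exact aux_np c (t' a) (p (X ω)) (d (X ω)) hc1 (ht'lt1 a) (hd01 _).1 (hd01 _).2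
          · have hχz : χ a (X ω) = 0 := by simp [hχdef, hga]
            rw [hχz]
            simp
        have hmD' : Measurable fun ω => χ a (X ω) * ((1 - p (X ω)) *
            ((if t' (g (X ω)) ≤ p (X ω) then (1:ℝ) else 0) - d (X ω))) :=
          ((hχm a).comp hX).mul ((measurable_const.sub hpX).mul
            (((hDm t').comp hX).sub (hd.comp hX)))
        have hbD' : ∀ ω, |χ a (X ω) * ((1 - p (X ω)) *
            ((if t' (g (X ω)) ≤ p (X ω) then (1:ℝ) else 0) - d (X ω)))| ≤ 2 := by
          intro ω
          rw [abs_mul, abs_mul]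
          have h1p : |1 - p (X ω)| ≤ 1 := by
            rw [abs_le]
            exact ⟨by linarith [(hp01 (X ω)).2], by linarith [(hp01 (X ω)).1]⟩
          calc |χ a (X ω)| * (|1 - p (X ω)| *
              |(if t' (g (X ω)) ≤ p (X ω) then (1:ℝ) else 0) - d (X ω)|) ≤ 1 * (1 * 2) := by
                refine mul_le_mul (hχb a _) ?_ (by positivity) zero_le_one
                exact mul_le_mul h1p (hD'b2 ω) (abs_nonneg _) zero_le_one
            _ = 2 := by norm_num
        have hmint1 : Integrable (fun ω => κ * (χ a (X ω) * ((1 - p (X ω)) *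
            ((if t' (g (X ω)) ≤ p (X ω) then (1:ℝ) else 0) - d (X ω))))) μ := by
          refine aux_int μ (measurable_const.mul hmD') (C := |κ| * 2) fun ω => ?_
          rw [abs_mul]
          exact mul_le_mul_of_nonneg_left (hbD' ω) (abs_nonneg κ)
        have hmint2 : Integrable (fun ω => χ a (X ω) * ((p (X ω) - c) *
            ((if t' (g (X ω)) ≤ p (X ω) then (1:ℝ) else 0) - d (X ω)))) μ := by
          refine aux_int μ (((hχm a).comp hX).mul ((hpX.sub measurable_const).mul
            (((hDm t').comp hX).sub (hd.comp hX)))) (C := 4) fun ω => ?_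
          rw [abs_mul, abs_mul]
          calc |χ a (X ω)| * (|p (X ω) - c| *
              |(if t' (g (X ω)) ≤ p (X ω) then (1:ℝ) else 0) - d (X ω)|) ≤ 1 * (2 * 2) := by
                refine mul_le_mul (hχb a _) ?_ (by positivity) zero_le_one
                exact mul_le_mul (hpcb ω) (hD'b2 ω) (abs_nonneg _) (by norm_num)
            _ = 4 := by norm_num
        have hIneq := integral_mono hmint1 hmint2 hpt
        have hint_chi_D' : Integrable (fun ω => χ a (X ω) * ((1 - p (X ω)) *
            (if t' (g (X ω)) ≤ p (X ω) then (1:ℝ) else 0))) μ := by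
          refine aux_int μ (((hχm a).comp hX).mul ((measurable_const.sub hpX).mul
            ((hDm t').comp hX))) (C := 2) fun ω => hbnd2 _ (hχb a _) _ (hDb t' _) _ ?_
          rw [abs_le]
          exact ⟨by linarith [(hp01 (X ω)).2], by linarith [(hp01 (X ω)).1]⟩
        have hint_chi_pcD' : Integrable (fun ω => χ a (X ω) * ((p (X ω) - c) *
            (if t' (g (X ω)) ≤ p (X ω) then (1:ℝ) else 0))) μ := by
          exact aux_int μ (((hχm a).comp hX).mul ((hpX.sub measurable_const).mul
            ((hDm t').comp hX))) (C := 2)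
            fun ω => hbnd2 _ (hχb a _) _ (hDb t' _) _ (hpcb ω)
        have hsplit1 : ∫ ω, χ a (X ω) * ((1 - p (X ω)) *
              ((if t' (g (X ω)) ≤ p (X ω) then (1:ℝ) else 0) - d (X ω))) ∂μ
            = (∫ ω, χ a (X ω) * ((1 - p (X ω)) *
                (if t' (g (X ω)) ≤ p (X ω) then (1:ℝ) else 0)) ∂μ)
              - ∫ ω, χ a (X ω) * ((1 - p (X ω)) * d (X ω)) ∂μ := by
          rw [← integral_sub hint_chi_D' (hint_chi_d a)]
          refine integral_congr_ae (Filter.Eventually.of_forall fun ω => ?_)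
          simp only
          ring
        have hsplit2 : ∫ ω, χ a (X ω) * ((p (X ω) - c) *
              ((if t' (g (X ω)) ≤ p (X ω) then (1:ℝ) else 0) - d (X ω))) ∂μ
            = (∫ ω, χ a (X ω) * ((p (X ω) - c) *
                (if t' (g (X ω)) ≤ p (X ω) then (1:ℝ) else 0)) ∂μ)
              - ∫ ω, χ a (X ω) * ((p (X ω) - c) * d (X ω)) ∂μ := by
          rw [← integral_sub hint_chi_pcD' (hint_chi_pcd a)]
          refine integral_congr_ae (Filter.Eventually.of_forall fun ω => ?_)
          simp only
          ring
        have hLHS : ∫ ω, κ * (χ a (X ω) * ((1 - p (X ω)) *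
            ((if t' (g (X ω)) ≤ p (X ω) then (1:ℝ) else 0) - d (X ω)))) ∂μ = 0 := by
          rw [integral_const_mul, hsplit1, thresh1 a t', hFPRa a, hG1fa a (t' a), ht'v a]
          ring
        rw [hLHS, hsplit2, thresh2 a t'] at hIneq
        linarith
      have hmpcd : Measurable fun ω => (p (X ω) - c) * d (X ω) :=
        (hpX.sub measurable_const).mul (hd.comp hX)
      have hbpcd : ∀ ω, |(p (X ω) - c) * d (X ω)| ≤ 2 := by
        intro ω
        rw [abs_mul]
        calc |p (X ω) - c| * |d (X ω)| ≤ 2 * 1 :=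
              mul_le_mul (hpcb ω) (hdb _) (abs_nonneg _) (by norm_num)
          _ = 2 := by norm_num
      rw [Vform d hd hdb, VD, VTval T]
      rw [decomp _ hmpcd 2 hbpcd]
      calc (∑ a : G, ∫ ω, χ a (X ω) * ((fun ω => (p (X ω) - c) * d (X ω)) ω) ∂μ)
          ≤ ∑ a : G, w a * G2 a (t' a) := Finset.sum_le_sum fun a _ => key a
        _ = U t' := by rw [hUdef]
        _ ≤ U T := hTmax ht'K
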